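/- Let E be a real normed vector space and let F, F̂ : E → E be bijections. Let β, β̃ ≥ 0 and ζ, μ ≥ 0, and suppose the inverse F⁻¹ is Lipschitz with constant β, the inverse F̂⁻¹ is Lipschitz with constant β̃, and ‖F̂⁻¹(x) − F⁻¹(x)‖ ≤ ζ for all x ∈ E. Let x : ℤ → E, ν : ℤ → E, ν̂ : ℤ → E be sequences with x_{j+1} = F(x_j) for all j ∈ ℤ, set y_j := x_j + ν_j, and suppose ‖ν̂_j − ν_j‖ ≤ μ for all j. Then for all j ∈ ℤ and all natural numbers i, the backward i-step prediction error satisfies ‖(F̂⁻¹)^i(y_j − ν̂_j) + ν̂_{j−i} − y_{j−i}‖ ≤ ζ · ∑_{k=0}^{i−1} β^k + (β̃^i + 1) · μ. -/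

import Mathlib

/-- Backward-in-time analogue of the multi-step prediction-error bound, using the
inverse flow maps: for bijections `F`, `Fhat` with Lipschitz inverses,
`‖(Fhat⁻¹)^i(y_j − nuhat_j) + nuhat_{j−i} − y_{j−i}‖ ≤ ζ ∑_{k=0}^{i−1} β^k + (betat^i + 1) μ`. -/
theorem backward_prediction_error_bound
    {E : Type*} [NormedAddCommGroup E] [NormedSpace ℝ E]
    (F Fhat : E ≃ E) (β betat ζ μ : ℝ)
    (hβ : 0 ≤ β) (hbetat : 0 ≤ betat) (hζ : 0 ≤ ζ) (hμ : 0 ≤ μ)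
    (hLipFinv : ∀ u v : E, ‖F.symm u - F.symm v‖ ≤ β * ‖u - v‖)
    (hLipFhatinv : ∀ u v : E, ‖Fhat.symm u - Fhat.symm v‖ ≤ betat * ‖u - v‖)
    (happrox : ∀ x : E, ‖Fhat.symm x - F.symm x‖ ≤ ζ)
    (x ν nuhat : ℤ → E)
    (htraj : ∀ j : ℤ, x (j + 1) = F (x j))
    (hnoise : ∀ j : ℤ, ‖nuhat j - ν j‖ ≤ μ) :
    ∀ (j : ℤ) (i : ℕ),
      ‖(⇑Fhat.symm)^[i] ((x j + ν j) - nuhat j) + nuhat (j - i) - (x (j - i) + ν (j - i))‖ ≤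
        ζ * ∑ k ∈ Finset.range i, β ^ k + (betat ^ i + 1) * μ := by
  intro j i
  have lipIter : ∀ (n : ℕ) (u v : E),
      ‖(⇑Fhat.symm)^[n] u - (⇑Fhat.symm)^[n] v‖ ≤ betat ^ n * ‖u - v‖ := by
    intro n
    induction n with
    | zero => intro u v; simp
    | succ n ih =>
      intro u v
      rw [Function.iterate_succ_apply', Function.iterate_succ_apply']
      calc ‖Fhat.symm ((⇑Fhat.symm)^[n] u) - Fhat.symm ((⇑Fhat.symm)^[n] v)‖
          ≤ betat * ‖(⇑Fhat.symm)^[n] u - (⇑Fhat.symm)^[n] v‖ := hLipFhatinv _ _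
        _ ≤ betat * (betat ^ n * ‖u - v‖) :=
            mul_le_mul_of_nonneg_left (ih u v) hbetat
        _ = betat ^ (n + 1) * ‖u - v‖ := by ring
  have hswitch : ∀ m : ℤ, F.symm (x m) = x (m - 1) := by
    intro m
    have h := htraj (m - 1)
    have : x m = F (x (m - 1)) := by rw [← h]; norm_num
    rw [this]; simp
  have hB : ∀ n : ℕ, ‖(⇑Fhat.symm)^[n] (x j) - x (j - n)‖ ≤ ζ * ∑ k ∈ Finset.range n, β ^ k := by
    intro n
    induction n with
    | zero => simp
    | succ n ih =>
      rw [Function.iterate_succ_apply']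
      have hx : x (j - ((n : ℤ) + 1)) = F.symm (x (j - n)) := by
        rw [hswitch (j - n)]; congr 1; ring
      have hcast : ((n + 1 : ℕ) : ℤ) = (n : ℤ) + 1 := by push_cast; ring
      rw [hcast, hx]
      calc ‖Fhat.symm ((⇑Fhat.symm)^[n] (x j)) - F.symm (x (j - n))‖
          ≤ ‖Fhat.symm ((⇑Fhat.symm)^[n] (x j)) - F.symm ((⇑Fhat.symm)^[n] (x j))‖
            + ‖F.symm ((⇑Fhat.symm)^[n] (x j)) - F.symm (x (j - n))‖ := by
            have := norm_sub_le_norm_sub_add_norm_sub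
              (Fhat.symm ((⇑Fhat.symm)^[n] (x j))) (F.symm ((⇑Fhat.symm)^[n] (x j)))
              (F.symm (x (j - n)))
            exact this
        _ ≤ ζ + β * ‖(⇑Fhat.symm)^[n] (x j) - x (j - n)‖ :=
            add_le_add (happrox _) (hLipFinv _ _)
        _ ≤ ζ + β * (ζ * ∑ k ∈ Finset.range n, β ^ k) := by
            have := mul_le_mul_of_nonneg_left ih hβ
            linarith
        _ = ζ * ∑ k ∈ Finset.range (n + 1), β ^ k := by rw [geom_sum_succ]; ring
  have key : (⇑Fhat.symm)^[i] ((x j + ν j) - nuhat j) + nuhat (j - i) - (x (j - i) + ν (j - i))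
      = ((⇑Fhat.symm)^[i] ((x j + ν j) - nuhat j) - (⇑Fhat.symm)^[i] (x j))
        + ((⇑Fhat.symm)^[i] (x j) - x (j - i)) + (nuhat (j - i) - ν (j - i)) := by abel
  rw [key]
  have h1 : ‖(⇑Fhat.symm)^[i] ((x j + ν j) - nuhat j) - (⇑Fhat.symm)^[i] (x j)‖
      ≤ betat ^ i * μ := by
    have := lipIter i ((x j + ν j) - nuhat j) (x j)
    have heq : (x j + ν j) - nuhat j - x j = -(nuhat j - ν j) := by abel
    rw [heq, norm_neg] at this
    exact this.trans (mul_le_mul_of_nonneg_left (hnoise j) (pow_nonneg hbetat i))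
  have h2 := hB i
  have h3 := hnoise (j - i)
  calc ‖((⇑Fhat.symm)^[i] ((x j + ν j) - nuhat j) - (⇑Fhat.symm)^[i] (x j))
        + ((⇑Fhat.symm)^[i] (x j) - x (j - i)) + (nuhat (j - i) - ν (j - i))‖
      ≤ ‖(⇑Fhat.symm)^[i] ((x j + ν j) - nuhat j) - (⇑Fhat.symm)^[i] (x j)‖
        + ‖(⇑Fhat.symm)^[i] (x j) - x (j - i)‖ + ‖nuhat (j - i) - ν (j - i)‖ :=
        norm_add₃_le
    _ ≤ betat ^ i * μ + ζ * ∑ k ∈ Finset.range i, β ^ k + μ := by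
        exact add_le_add (add_le_add h1 h2) h3
    _ = ζ * ∑ k ∈ Finset.range i, β ^ k + (betat ^ i + 1) * μ := by ring
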